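/- Let U = ℂ² \ {0} and let Φ_S : U → ℝ be the Simanca potential Φ_S(z) = |z|² + log(|z|²), where |z|² = |z₁|² + |z₂|². Then Φ_S is projectively induced on U: there exist holomorphic functions h_j : U → ℂ (j ∈ ℕ) — namely an enumeration of the monomials √((j+k)/(j!·k!))·z₁^j·z₂^k for (j,k) ∈ ℕ², (j,k) ≠ (0,0) — such that Σ_{j∈ℕ} |h_j(z)|² = exp(Φ_S(z)) for every z ∈ U. -/

import Mathlib

open Finset in
private lemma hasSum_mul_exp (x : ℝ) :
    HasSum (fun n : ℕ => (n : ℝ) * x ^ n / n.factorial) (x * Real.exp x) := by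
  have hE : HasSum (fun n : ℕ => x ^ n / n.factorial) (Real.exp x) := by
    rw [Real.exp_eq_exp_ℝ]; exact NormedSpace.expSeries_div_hasSum_exp x
  have h1 : HasSum (fun n : ℕ => ((n + 1 : ℕ) : ℝ) * x ^ (n + 1) / (n + 1).factorial)
      (x * Real.exp x) := by
    have := hE.mul_left x
    refine this.congr_fun fun n => ?_
    rw [Nat.factorial_succ]
    have h0 : (n.factorial : ℝ) ≠ 0 := Nat.cast_ne_zero.2 n.factorial_ne_zero
    push_cast
    field_simp
    ring
  refine (hasSum_nat_add_iff' (f := fun n : ℕ => (n : ℝ) * x ^ n / n.factorial)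
    (g := x * Real.exp x) 1).mp ?_
  simpa using h1

set_option maxHeartbeats 2000000 in
/-- The Simanca potential `Φ_S(z) = |z|² + log |z|²` on `ℂ² \ {0}` is projectively induced:
there is a sequence of holomorphic functions `h_j` — an enumeration of the monomials
`√((j+k)/(j! k!)) z₁ʲ z₂ᵏ`, `(j,k) ≠ (0,0)` — with `Σ_j |h_j(z)|² = exp (Φ_S z)` on
`ℂ² \ {0}`. -/
theorem simanca_projectively_induced :
    ∃ (e : ℕ ≃ {q : ℕ × ℕ // q ≠ (0, 0)}) (h : ℕ → EuclideanSpace ℂ (Fin 2) → ℂ),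
      (∀ j z, h j z =
        (Real.sqrt ((((e j).1.1 + (e j).1.2 : ℕ) : ℝ) /
          (((e j).1.1.factorial : ℝ) * ((e j).1.2.factorial : ℝ))) : ℝ)
          * z 0 ^ (e j).1.1 * z 1 ^ (e j).1.2) ∧
      (∀ j, DifferentiableOn ℂ (h j) ({0}ᶜ : Set (EuclideanSpace ℂ (Fin 2)))) ∧
      ∀ z ∈ ({0}ᶜ : Set (EuclideanSpace ℂ (Fin 2))),
        HasSum (fun j => ‖h j z‖ ^ 2)
          (Real.exp (‖z‖ ^ 2 + Real.log (‖z‖ ^ 2))) := by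
  haveI : Infinite {q : ℕ × ℕ // q ≠ (0, 0)} :=
    Infinite.of_injective (fun n : ℕ => (⟨(n + 1, 0), by simp⟩ : {q : ℕ × ℕ // q ≠ (0, 0)}))
      (fun a b hab => by simpa using congrArg (fun q : {q : ℕ × ℕ // q ≠ (0, 0)} => q.1.1) hab)
  haveI : Denumerable {q : ℕ × ℕ // q ≠ (0, 0)} := Denumerable.ofEncodableOfInfinite _
  set e := (Denumerable.eqv {q : ℕ × ℕ // q ≠ (0, 0)}).symm with he
  refine ⟨e, fun j z =>
      ((Real.sqrt ((((e j).1.1 + (e j).1.2 : ℕ) : ℝ) /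
        (((e j).1.1.factorial : ℝ) * ((e j).1.2.factorial : ℝ))) : ℝ) : ℂ)
        * z 0 ^ (e j).1.1 * z 1 ^ (e j).1.2, fun j z => rfl, ?_, ?_⟩
  · intro j
    have hproj : ∀ i : Fin 2, Differentiable ℂ (fun z : EuclideanSpace ℂ (Fin 2) => z i) :=
      fun i => (EuclideanSpace.proj (𝕜 := ℂ) i).differentiable
    exact (((differentiable_const _).mul ((hproj 0).pow _)).mul
      ((hproj 1).pow _)).differentiableOn
  · intro z hz
    have hz0 : z ≠ 0 := hz
    set x := ‖z 0‖ ^ 2 with hxdef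
    set y := ‖z 1‖ ^ 2 with hydef
    have hx0 : 0 ≤ x := sq_nonneg _
    have hy0 : 0 ≤ y := sq_nonneg _
    have hxy : ‖z‖ ^ 2 = x + y := by
      rw [EuclideanSpace.norm_eq, Real.sq_sqrt (Finset.sum_nonneg fun i _ => sq_nonneg _),
        Fin.sum_univ_two]
    have hzn : ‖z‖ ≠ 0 := norm_ne_zero_iff.2 hz0
    have hnormpos : (0 : ℝ) < ‖z‖ ^ 2 := by positivity
    -- the target value
    have hval : Real.exp (‖z‖ ^ 2 + Real.log (‖z‖ ^ 2)) = (x + y) * Real.exp (x + y) := by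
      rw [Real.exp_add, Real.exp_log hnormpos, hxy]; ring
    rw [hval]
    -- the summand as a function of the pair
    set F : ℕ × ℕ → ℝ := fun p =>
      (((p.1 + p.2 : ℕ) : ℝ) / ((p.1.factorial : ℝ) * (p.2.factorial : ℝ))) * x ^ p.1 * y ^ p.2
      with hF
    -- HasSum over all pairs
    have hEx : HasSum (fun n : ℕ => x ^ n / n.factorial) (Real.exp x) := by
      rw [Real.exp_eq_exp_ℝ]; exact NormedSpace.expSeries_div_hasSum_exp x
    have hEy : HasSum (fun n : ℕ => y ^ n / n.factorial) (Real.exp y) := by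
      rw [Real.exp_eq_exp_ℝ]; exact NormedSpace.expSeries_div_hasSum_exp y
    have hAx := hasSum_mul_exp x
    have hBy := hasSum_mul_exp y
    have nx1 : ∀ n : ℕ, 0 ≤ (n : ℝ) * x ^ n / n.factorial := fun n => by positivity
    have ny1 : ∀ n : ℕ, 0 ≤ (n : ℝ) * y ^ n / n.factorial := fun n => by positivity
    have nx2 : ∀ n : ℕ, 0 ≤ x ^ n / (n.factorial : ℝ) := fun n => by positivity
    have ny2 : ∀ n : ℕ, 0 ≤ y ^ n / (n.factorial : ℝ) := fun n => by positivity
    have hP1 : HasSum (fun p : ℕ × ℕ =>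
        ((p.1 : ℝ) * x ^ p.1 / p.1.factorial) * (y ^ p.2 / p.2.factorial))
        (x * Real.exp x * Real.exp y) :=
      hAx.mul hEy (hAx.summable.mul_of_nonneg hEy.summable nx1 ny2)
    have hP2 : HasSum (fun p : ℕ × ℕ =>
        (x ^ p.1 / p.1.factorial) * ((p.2 : ℝ) * y ^ p.2 / p.2.factorial))
        (Real.exp x * (y * Real.exp y)) :=
      hEx.mul hBy (hEx.summable.mul_of_nonneg hBy.summable nx2 ny1)
    have hFsum : HasSum F ((x + y) * Real.exp (x + y)) := by
      have hadd := hP1.add hP2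
      have hfun : ∀ p : ℕ × ℕ,
          F p = ((p.1 : ℝ) * x ^ p.1 / p.1.factorial) * (y ^ p.2 / p.2.factorial)
            + (x ^ p.1 / p.1.factorial) * ((p.2 : ℝ) * y ^ p.2 / p.2.factorial) := by
        intro p
        have h1 : (p.1.factorial : ℝ) ≠ 0 := Nat.cast_ne_zero.2 p.1.factorial_ne_zero
        have h2 : (p.2.factorial : ℝ) ≠ 0 := Nat.cast_ne_zero.2 p.2.factorial_ne_zero
        rw [hF]
        push_cast
        field_simp
      have hv : x * Real.exp x * Real.exp y + Real.exp x * (y * Real.exp y)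
          = (x + y) * Real.exp (x + y) := by rw [Real.exp_add]; ring
      rw [← hv]
      exact hadd.congr_fun hfun
    -- restrict to the subtype
    have hsupp : Function.support F ⊆ {q : ℕ × ℕ | q ≠ (0, 0)} := by
      intro p hp
      simp only [Set.mem_setOf_eq]
      rintro rfl
      simp [hF] at hp
    have hFsub : HasSum (fun q : {q : ℕ × ℕ // q ≠ (0, 0)} => F q.1)
        ((x + y) * Real.exp (x + y)) :=
      (hasSum_subtype_iff_of_support_subset hsupp).2 hFsum
    -- transport along the equivalence
    have hFe : HasSum (fun j : ℕ => F (e j).1) ((x + y) * Real.exp (x + y)) :=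
      e.hasSum_iff.2 hFsub
    refine hFe.congr_fun fun j => ?_
    -- termwise identity
    set c : ℝ := (((e j).1.1 + (e j).1.2 : ℕ) : ℝ) /
      (((e j).1.1.factorial : ℝ) * ((e j).1.2.factorial : ℝ)) with hc
    have hc0 : 0 ≤ c := by positivity
    have : ‖((Real.sqrt c : ℝ) : ℂ) * z 0 ^ (e j).1.1 * z 1 ^ (e j).1.2‖ ^ 2
        = c * x ^ (e j).1.1 * y ^ (e j).1.2 := by
      rw [norm_mul, norm_mul, norm_pow, norm_pow, Complex.norm_real,
        Real.norm_eq_abs, abs_of_nonneg (Real.sqrt_nonneg _), mul_pow, mul_pow,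
        Real.sq_sqrt hc0, hxdef, hydef]
      ring
    rw [hF, this, hc]
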